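/- Let l₁, l₂ > 0. Then the number of pairs of positive integers (m, n) with m²π²/l₁² + n²π²/l₂² ≤ λ, divided by λ, tends to l₁l₂/(4π) as λ → ∞. (This is Weyl's law for the Dirichlet eigenvalues of a rectangle with side lengths l₁ and l₂.) -/

import Mathlib

open Real Filter MeasureTheory intervalIntegral Finset

private lemma wl_integral_sqrt_one_sub_sq :
    ∫ x in (0:ℝ)..1, Real.sqrt (1 - x ^ 2) = Real.pi / 4 := by
  have hcont : Continuous fun x : ℝ => Real.sqrt (1 - x ^ 2) :=
    (continuous_const.sub (continuous_pow 2)).sqrt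
  have h1 : (∫ x in (-1:ℝ)..0, Real.sqrt (1 - x ^ 2))
      = ∫ x in (0:ℝ)..1, Real.sqrt (1 - x ^ 2) := by
    have h := intervalIntegral.integral_comp_neg (a := (0:ℝ)) (b := (1:ℝ))
      (fun x => Real.sqrt (1 - x ^ 2))
    simp only [neg_zero, neg_neg, even_two, Even.neg_pow] at h
    exact h.symm
  have h2 : (∫ x in (-1:ℝ)..0, Real.sqrt (1 - x ^ 2))
      + (∫ x in (0:ℝ)..1, Real.sqrt (1 - x ^ 2))
      = ∫ x in (-1:ℝ)..1, Real.sqrt (1 - x ^ 2) :=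
    intervalIntegral.integral_add_adjacent_intervals
      (hcont.intervalIntegrable _ _) (hcont.intervalIntegrable _ _)
  have h3 := integral_sqrt_one_sub_sq
  rw [h1] at h2
  linarith

private lemma wl_quarter_circle {X : ℝ} (hX : 0 ≤ X) :
    ∫ x in (0:ℝ)..X, Real.sqrt (X ^ 2 - x ^ 2) = Real.pi * X ^ 2 / 4 := by
  rcases eq_or_lt_of_le hX with h | h
  · simp [← h]
  · have hXne : X ≠ 0 := ne_of_gt h
    have key : ∀ x : ℝ, Real.sqrt (X ^ 2 - x ^ 2)
        = X * Real.sqrt (1 - (X⁻¹ * x) ^ 2) := by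
      intro x
      rw [show X ^ 2 - x ^ 2 = X ^ 2 * (1 - (X⁻¹ * x) ^ 2) by field_simp,
        Real.sqrt_mul (sq_nonneg X), Real.sqrt_sq hX]
    simp_rw [key]
    rw [intervalIntegral.integral_const_mul,
      intervalIntegral.integral_comp_mul_left (fun x => Real.sqrt (1 - x ^ 2))
        (inv_ne_zero hXne)]
    rw [mul_zero, inv_mul_cancel₀ hXne, inv_inv, wl_integral_sqrt_one_sub_sq]
    rw [smul_eq_mul]
    ring

private lemma wl_count_bounds (l₁ l₂ : ℝ) (h₁ : 0 < l₁) (h₂ : 0 < l₂) (Λ : ℝ)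
    (hΛ : 1 ≤ Λ) :
    Λ * (l₁ * l₂ / (4 * Real.pi)) - ((l₁ + l₂) / Real.pi) * Real.sqrt Λ
      ≤ (Nat.card {p : ℕ × ℕ // 0 < p.1 ∧ 0 < p.2 ∧
          (p.1 : ℝ) ^ 2 * Real.pi ^ 2 / l₁ ^ 2 + (p.2 : ℝ) ^ 2 * Real.pi ^ 2 / l₂ ^ 2 ≤ Λ} : ℝ)
      ∧ (Nat.card {p : ℕ × ℕ // 0 < p.1 ∧ 0 < p.2 ∧
          (p.1 : ℝ) ^ 2 * Real.pi ^ 2 / l₁ ^ 2 + (p.2 : ℝ) ^ 2 * Real.pi ^ 2 / l₂ ^ 2 ≤ Λ} : ℝ)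
        ≤ Λ * (l₁ * l₂ / (4 * Real.pi)) := by
  classical
  have hπ := Real.pi_pos
  have hΛ0 : (0:ℝ) ≤ Λ := by linarith
  set X : ℝ := l₁ * Real.sqrt Λ / Real.pi with hXdef
  have hX0 : 0 ≤ X := by positivity
  have hX2 : X ^ 2 = l₁ ^ 2 * Λ / Real.pi ^ 2 := by
    rw [hXdef, div_pow, mul_pow, Real.sq_sqrt hΛ0]
  set g : ℝ → ℝ := fun x => (l₂ / l₁) * Real.sqrt (X ^ 2 - x ^ 2) with hgdef
  have hg_nonneg : ∀ x, 0 ≤ g x := fun x => by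
    simp only [hgdef]; positivity
  have hg_cont : Continuous g := by
    simp only [hgdef]
    exact continuous_const.mul ((continuous_const.sub (continuous_pow 2)).sqrt)
  have hg_int : ∀ a b : ℝ, IntervalIntegrable g volume a b :=
    fun a b => hg_cont.intervalIntegrable a b
  have hg_anti : AntitoneOn g (Set.Ici (0:ℝ)) := by
    intro x hx y hy hxy
    simp only [hgdef]
    have hx0 : (0:ℝ) ≤ x := hx
    have : x ^ 2 ≤ y ^ 2 := by nlinarith
    exact mul_le_mul_of_nonneg_left (Real.sqrt_le_sqrt (by linarith)) (by positivity)
  set M : ℕ := Nat.floor X with hMdef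
  set G : ℕ → ℕ := fun m => Nat.floor (g m) with hGdef
  have hMX : (M:ℝ) ≤ X := Nat.floor_le hX0
  have hXM1 : X ≤ (M:ℝ) + 1 := (Nat.lt_floor_add_one X).le
  -- key equivalence
  have key : ∀ m n : ℕ, 0 < m → 0 < n →
      (((m : ℝ) ^ 2 * Real.pi ^ 2 / l₁ ^ 2 + (n : ℝ) ^ 2 * Real.pi ^ 2 / l₂ ^ 2 ≤ Λ)
        ↔ (m ≤ M ∧ n ≤ G m)) := by
    intro m n hm hn
    have hm1 : (1:ℝ) ≤ (m:ℝ) := by exact_mod_cast hm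
    have hn1 : (1:ℝ) ≤ (n:ℝ) := by exact_mod_cast hn
    have hgm : g m = Real.sqrt ((l₂ / l₁) ^ 2 * (X ^ 2 - (m:ℝ) ^ 2)) := by
      simp only [hgdef]
      rw [Real.sqrt_mul (sq_nonneg _), Real.sqrt_sq (by positivity)]
    have hiden : (l₂ / l₁) ^ 2 * (X ^ 2 - (m:ℝ) ^ 2)
        = (Λ - (m:ℝ) ^ 2 * Real.pi ^ 2 / l₁ ^ 2) * (l₂ ^ 2 / Real.pi ^ 2) := by
      rw [hX2]; field_simp
    constructor
    · rintro hcond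
      have ht : (n:ℝ) ^ 2 * Real.pi ^ 2 / l₂ ^ 2 ≤ Λ - (m:ℝ) ^ 2 * Real.pi ^ 2 / l₁ ^ 2 := by
        linarith
      have hn2 : (n:ℝ) ^ 2 ≤ (l₂ / l₁) ^ 2 * (X ^ 2 - (m:ℝ) ^ 2) := by
        rw [hiden]
        have e : (n:ℝ) ^ 2 = ((n:ℝ) ^ 2 * Real.pi ^ 2 / l₂ ^ 2) * (l₂ ^ 2 / Real.pi ^ 2) := by
          field_simp
        rw [e]
        exact mul_le_mul_of_nonneg_right ht (by positivity)
      have hmX : (m:ℝ) ≤ X := by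
        have h0 : (0:ℝ) ≤ (n:ℝ) ^ 2 * Real.pi ^ 2 / l₂ ^ 2 := by positivity
        have hm2 : (m:ℝ) ^ 2 ≤ X ^ 2 := by
          rw [hX2]
          have hml : (m:ℝ) ^ 2 * Real.pi ^ 2 / l₁ ^ 2 ≤ Λ := by linarith
          calc (m:ℝ) ^ 2 = ((m:ℝ) ^ 2 * Real.pi ^ 2 / l₁ ^ 2) * (l₁ ^ 2 / Real.pi ^ 2) := by
                field_simp
            _ ≤ Λ * (l₁ ^ 2 / Real.pi ^ 2) := by
                exact mul_le_mul_of_nonneg_right hml (by positivity)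
            _ = l₁ ^ 2 * Λ / Real.pi ^ 2 := by ring
        nlinarith
      refine ⟨Nat.le_floor hmX, Nat.le_floor ?_⟩
      rw [hgm]
      exact (Real.le_sqrt' (by linarith)).mpr hn2
    · rintro ⟨hmM, hnG⟩
      have hng : (n:ℝ) ≤ g m := by
        calc (n:ℝ) ≤ (G m : ℝ) := by exact_mod_cast hnG
          _ ≤ g m := Nat.floor_le (hg_nonneg _)
      have hn2 : (n:ℝ) ^ 2 ≤ (l₂ / l₁) ^ 2 * (X ^ 2 - (m:ℝ) ^ 2) := by
        rw [hgm] at hng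
        exact (Real.le_sqrt' (by linarith)).mp hng
      rw [hiden] at hn2
      have h5 : (n:ℝ) ^ 2 * Real.pi ^ 2 / l₂ ^ 2
          ≤ Λ - (m:ℝ) ^ 2 * Real.pi ^ 2 / l₁ ^ 2 := by
        have h6 := mul_le_mul_of_nonneg_right hn2 (le_of_lt (by positivity :
          (0:ℝ) < Real.pi ^ 2 / l₂ ^ 2))
        calc (n:ℝ) ^ 2 * Real.pi ^ 2 / l₂ ^ 2
            = (n:ℝ) ^ 2 * (Real.pi ^ 2 / l₂ ^ 2) := by ring
          _ ≤ ((Λ - (m:ℝ) ^ 2 * Real.pi ^ 2 / l₁ ^ 2) * (l₂ ^ 2 / Real.pi ^ 2))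
              * (Real.pi ^ 2 / l₂ ^ 2) := h6
          _ = Λ - (m:ℝ) ^ 2 * Real.pi ^ 2 / l₁ ^ 2 := by field_simp
      linarith
  -- the set as a finset
  set F : Finset (ℕ × ℕ) :=
    (Finset.Icc 1 M).biUnion (fun m => (Finset.Icc 1 (G m)).image (fun n => (m, n)))
    with hFdef
  have hset : {p : ℕ × ℕ | 0 < p.1 ∧ 0 < p.2 ∧
      (p.1 : ℝ) ^ 2 * Real.pi ^ 2 / l₁ ^ 2 + (p.2 : ℝ) ^ 2 * Real.pi ^ 2 / l₂ ^ 2 ≤ Λ}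
      = ↑F := by
    ext ⟨m, n⟩
    simp only [Set.mem_setOf_eq, hFdef, Finset.coe_biUnion, Finset.mem_coe,
      Finset.mem_Icc, Set.mem_iUnion, Finset.mem_image, Prod.mk.injEq]
    constructor
    · rintro ⟨hm, hn, hcond⟩
      obtain ⟨hmM, hnG⟩ := (key m n hm hn).mp hcond
      exact ⟨m, ⟨hm, hmM⟩, n, ⟨hn, hnG⟩, rfl, rfl⟩
    · rintro ⟨a, ⟨ha1, haM⟩, b, ⟨hb1, hbG⟩, rfl, rfl⟩
      exact ⟨ha1, hb1, (key _ _ ha1 hb1).mpr ⟨haM, hbG⟩⟩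
  have hcard : (Nat.card {p : ℕ × ℕ // 0 < p.1 ∧ 0 < p.2 ∧
      (p.1 : ℝ) ^ 2 * Real.pi ^ 2 / l₁ ^ 2 + (p.2 : ℝ) ^ 2 * Real.pi ^ 2 / l₂ ^ 2 ≤ Λ})
      = ∑ m ∈ Finset.Icc 1 M, G m := by
    have e1 : Nat.card {p : ℕ × ℕ // 0 < p.1 ∧ 0 < p.2 ∧
        (p.1 : ℝ) ^ 2 * Real.pi ^ 2 / l₁ ^ 2 + (p.2 : ℝ) ^ 2 * Real.pi ^ 2 / l₂ ^ 2 ≤ Λ}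
        = F.card := by
      have h := Nat.card_coe_set_eq {p : ℕ × ℕ | 0 < p.1 ∧ 0 < p.2 ∧
        (p.1 : ℝ) ^ 2 * Real.pi ^ 2 / l₁ ^ 2 + (p.2 : ℝ) ^ 2 * Real.pi ^ 2 / l₂ ^ 2 ≤ Λ}
      exact h.trans (by rw [hset]; exact Set.ncard_coe_finset F)
    rw [e1, hFdef, Finset.card_biUnion]
    · refine Finset.sum_congr rfl fun m _ => ?_
      rw [Finset.card_image_of_injective _ (fun a b hab => by simpa using hab),
        Nat.card_Icc]
      omega
    · intro a _ b _ hab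
      simp only [Finset.disjoint_left, Finset.mem_image]
      rintro ⟨x, y⟩ ⟨u, -, hu⟩ ⟨v, -, hv⟩
      apply hab
      rw [Prod.mk.injEq] at hu hv
      exact hu.1.trans hv.1.symm
  -- sum/integral comparisons
  have hreindex : ∀ f : ℕ → ℝ,
      ∑ m ∈ Finset.Icc 1 M, f m = ∑ i ∈ Finset.range M, f (1 + i) := by
    intro f
    rw [← Finset.Ico_add_one_right_eq_Icc, Finset.sum_Ico_eq_sum_range]
    simp
  have hsum_upper : ∑ m ∈ Finset.Icc 1 M, g m ≤ ∫ x in (0:ℝ)..(M:ℝ), g x := by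
    have hanti : AntitoneOn g (Set.Icc (0:ℝ) (0 + (M:ℕ))) :=
      hg_anti.mono (fun x hx => hx.1)
    have h := hanti.sum_le_integral
    rw [hreindex (fun m => g m)]
    calc ∑ i ∈ Finset.range M, g ((1 + i : ℕ) : ℝ)
        = ∑ i ∈ Finset.range M, g ((0:ℝ) + ((i + 1 : ℕ) : ℝ)) := by
          refine Finset.sum_congr rfl fun i _ => ?_
          congr 1
          push_cast
          ring
      _ ≤ ∫ x in (0:ℝ)..((0:ℝ) + (M:ℕ)), g x := h
      _ = ∫ x in (0:ℝ)..(M:ℝ), g x := by norm_num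
  have hintM_le : ∫ x in (0:ℝ)..(M:ℝ), g x ≤ ∫ x in (0:ℝ)..X, g x := by
    rw [← intervalIntegral.integral_add_adjacent_intervals (hg_int 0 M) (hg_int M X)]
    have h : 0 ≤ ∫ x in (M:ℝ)..X, g x :=
      intervalIntegral.integral_nonneg hMX (fun x _ => hg_nonneg x)
    linarith
  have hAint : ∫ x in (0:ℝ)..X, g x = Λ * (l₁ * l₂ / (4 * Real.pi)) := by
    simp only [hgdef]
    rw [intervalIntegral.integral_const_mul, wl_quarter_circle hX0, hX2]
    field_simp
  have hsum_lower : ∫ x in (1:ℝ)..((1:ℝ) + (M:ℕ)), g x ≤ ∑ m ∈ Finset.Icc 1 M, g m := by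
    have hanti : AntitoneOn g (Set.Icc (1:ℝ) (1 + (M:ℕ))) :=
      hg_anti.mono (fun x hx => le_trans zero_le_one hx.1)
    have h := hanti.integral_le_sum
    rw [hreindex (fun m => g m)]
    calc ∫ x in (1:ℝ)..((1:ℝ) + (M:ℕ)), g x
        ≤ ∑ i ∈ Finset.range M, g ((1:ℝ) + (i:ℕ)) := h
      _ = ∑ i ∈ Finset.range M, g ((1 + i : ℕ) : ℝ) := by
          refine Finset.sum_congr rfl fun i _ => ?_
          congr 1
          push_cast
          ring
  have h01 : ∫ x in (0:ℝ)..1, g x ≤ g 0 := by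
    have h := intervalIntegral.integral_mono_on zero_le_one (hg_int 0 1)
      (_root_.intervalIntegrable_const (c := g 0))
      (fun x hx => hg_anti Set.self_mem_Ici hx.1 hx.1)
    rw [intervalIntegral.integral_const, sub_zero, one_smul] at h
    exact h
  have hint1 : (∫ x in (0:ℝ)..X, g x) - g 0 ≤ ∫ x in (1:ℝ)..((1:ℝ) + (M:ℕ)), g x := by
    have split1 : (∫ x in (0:ℝ)..1, g x) + (∫ x in (1:ℝ)..((1:ℝ) + (M:ℕ)), g x)
        = ∫ x in (0:ℝ)..((1:ℝ) + (M:ℕ)), g x :=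
      intervalIntegral.integral_add_adjacent_intervals (hg_int _ _) (hg_int _ _)
    have split2 : (∫ x in (0:ℝ)..X, g x) + (∫ x in X..((1:ℝ) + (M:ℕ)), g x)
        = ∫ x in (0:ℝ)..((1:ℝ) + (M:ℕ)), g x :=
      intervalIntegral.integral_add_adjacent_intervals (hg_int _ _) (hg_int _ _)
    have hnn : 0 ≤ ∫ x in X..((1:ℝ) + (M:ℕ)), g x :=
      intervalIntegral.integral_nonneg (by linarith) (fun x _ => hg_nonneg x)
    linarith
  have hg0 : g 0 = l₂ * Real.sqrt Λ / Real.pi := by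
    simp only [hgdef]
    rw [show X ^ 2 - (0:ℝ) ^ 2 = X ^ 2 by ring, Real.sqrt_sq hX0, hXdef]
    field_simp
  -- put everything together
  have hGle : ∀ m : ℕ, (G m : ℝ) ≤ g m := fun m => Nat.floor_le (hg_nonneg _)
  have hGge : ∀ m : ℕ, g m - 1 ≤ (G m : ℝ) := fun m => (Nat.sub_one_lt_floor (g m)).le
  have hsum_eq : (Nat.card {p : ℕ × ℕ // 0 < p.1 ∧ 0 < p.2 ∧
      (p.1 : ℝ) ^ 2 * Real.pi ^ 2 / l₁ ^ 2 + (p.2 : ℝ) ^ 2 * Real.pi ^ 2 / l₂ ^ 2 ≤ Λ} : ℝ)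
      = ∑ m ∈ Finset.Icc 1 M, (G m : ℝ) := by
    rw [hcard]
    push_cast
    rfl
  constructor
  · -- lower bound
    rw [hsum_eq]
    have c1 : ∑ m ∈ Finset.Icc 1 M, (g m - 1) ≤ ∑ m ∈ Finset.Icc 1 M, (G m : ℝ) :=
      Finset.sum_le_sum fun m _ => hGge m
    have c2 : ∑ m ∈ Finset.Icc 1 M, (g m - 1)
        = (∑ m ∈ Finset.Icc 1 M, g m) - M := by
      rw [Finset.sum_sub_distrib, Finset.sum_const, Nat.card_Icc]
      simp
    have hMle : (M:ℝ) ≤ l₁ * Real.sqrt Λ / Real.pi := by rw [← hXdef]; exact hMX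
    have : Λ * (l₁ * l₂ / (4 * Real.pi)) - ((l₁ + l₂) / Real.pi) * Real.sqrt Λ
        ≤ (∑ m ∈ Finset.Icc 1 M, g m) - M := by
      have := hint1
      rw [hAint] at this
      have h7 := hsum_lower
      rw [hg0] at this
      have expand : Λ * (l₁ * l₂ / (4 * Real.pi)) - ((l₁ + l₂) / Real.pi) * Real.sqrt Λ
          = (Λ * (l₁ * l₂ / (4 * Real.pi)) - l₂ * Real.sqrt Λ / Real.pi)
            - l₁ * Real.sqrt Λ / Real.pi := by ring
      rw [expand]
      linarith
    linarith
  · -- upper bound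
    rw [hsum_eq]
    have c1 : ∑ m ∈ Finset.Icc 1 M, (G m : ℝ) ≤ ∑ m ∈ Finset.Icc 1 M, g m :=
      Finset.sum_le_sum fun m _ => hGle m
    rw [← hAint]
    linarith

theorem weyl_law_rectangle_dirichlet (l₁ l₂ : ℝ) (h₁ : 0 < l₁) (h₂ : 0 < l₂) :
    Filter.Tendsto
      (fun Λ : ℝ =>
        (Nat.card {p : ℕ × ℕ // 0 < p.1 ∧ 0 < p.2 ∧
          (p.1 : ℝ) ^ 2 * Real.pi ^ 2 / l₁ ^ 2 + (p.2 : ℝ) ^ 2 * Real.pi ^ 2 / l₂ ^ 2 ≤ Λ} : ℝ)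
          / Λ)
      Filter.atTop (nhds (l₁ * l₂ / (4 * Real.pi))) := by
  have hπ := Real.pi_pos
  have hsqrt : Tendsto Real.sqrt atTop atTop := by
    refine tendsto_atTop.mpr fun b => ?_
    filter_upwards [eventually_ge_atTop ((max b 0) ^ 2)] with x hx
    calc b ≤ max b 0 := le_max_left _ _
      _ = Real.sqrt ((max b 0) ^ 2) := (Real.sqrt_sq (le_max_right _ _)).symm
      _ ≤ Real.sqrt x := Real.sqrt_le_sqrt hx
  have hlow : Tendsto (fun Λ : ℝ =>
      l₁ * l₂ / (4 * Real.pi) - ((l₁ + l₂) / Real.pi) * (Real.sqrt Λ)⁻¹)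
      atTop (nhds (l₁ * l₂ / (4 * Real.pi))) := by
    have h0 : Tendsto (fun Λ : ℝ => (Real.sqrt Λ)⁻¹) atTop (nhds 0) :=
      hsqrt.inv_tendsto_atTop
    have h1 : Tendsto (fun Λ : ℝ => ((l₁ + l₂) / Real.pi) * (Real.sqrt Λ)⁻¹)
        atTop (nhds 0) := by simpa using h0.const_mul ((l₁ + l₂) / Real.pi)
    have h2 : Tendsto (fun Λ : ℝ =>
        l₁ * l₂ / (4 * Real.pi) - ((l₁ + l₂) / Real.pi) * (Real.sqrt Λ)⁻¹)
        atTop (nhds (l₁ * l₂ / (4 * Real.pi) - 0)) := tendsto_const_nhds.sub h1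
    simpa using h2
  refine tendsto_of_tendsto_of_tendsto_of_le_of_le' hlow tendsto_const_nhds ?_ ?_
  · filter_upwards [eventually_ge_atTop (1:ℝ)] with Λ hΛ
    have hΛpos : (0:ℝ) < Λ := by linarith
    have h := (wl_count_bounds l₁ l₂ h₁ h₂ Λ hΛ).1
    rw [le_div_iff₀ hΛpos]
    have hinv : ((l₁ + l₂) / Real.pi) * (Real.sqrt Λ)⁻¹ * Λ
        = ((l₁ + l₂) / Real.pi) * Real.sqrt Λ := by
      rw [mul_assoc, inv_mul_eq_div, Real.div_sqrt]
    calc (l₁ * l₂ / (4 * Real.pi) - ((l₁ + l₂) / Real.pi) * (Real.sqrt Λ)⁻¹) * Λ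
        = Λ * (l₁ * l₂ / (4 * Real.pi)) - ((l₁ + l₂) / Real.pi) * (Real.sqrt Λ)⁻¹ * Λ := by
          ring
      _ = Λ * (l₁ * l₂ / (4 * Real.pi)) - ((l₁ + l₂) / Real.pi) * Real.sqrt Λ := by
          rw [hinv]
      _ ≤ _ := h
  · filter_upwards [eventually_ge_atTop (1:ℝ)] with Λ hΛ
    have hΛpos : (0:ℝ) < Λ := by linarith
    have h := (wl_count_bounds l₁ l₂ h₁ h₂ Λ hΛ).2
    rw [div_le_iff₀ hΛpos]
    linarith [h]
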